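/- Let G be a group, K a normal subgroup of G, N = {N_i} an N-series of G, R a commutative ring and n ≥ 1. Let πN denote the N-series {N_i·K/K} of G/K. Then: (a) the map P_n(π): P_{n,R}^N(G,K) → P_{n,R}^{πN}(G/K), sending the class of a−1 (a ∈ G) to the class of aK−1, is a well-defined surjective homomorphism; (b) the map K·N_{n+1} → P_{n,R}^N(G,K), k ↦ class of (k−1), induces a well-defined homomorphism on the abelian group K·N_{n+1}/([K,K]·N_{n+1}), and the kernel of P_n(π) equals the image of the R-linear extension R ⊗_ℤ (K·N_{n+1}/([K,K]·N_{n+1})) → P_{n,R}^N(G,K) of this homomorphism. That is, the sequence R ⊗ (K·N_{n+1}/[K,K]·N_{n+1}) → P_{n,R}^N(G,K) → P_{n,R}^{πN}(G/K) → 0 is exact. -/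

import Mathlib

open MonoidAlgebra
open scoped commutatorElement

/-- An N-series of a group `G`: a descending chain `G = N 1 ⊇ N 2 ⊇ ⋯` of subgroups
with `[N i, N j] ⊆ N (i+j)`.  (The value `N 0` is irrelevant.) -/
def IsNSeries (G : Type*) [Group G] (N : ℕ → Subgroup G) : Prop :=
  N 1 = ⊤ ∧ (∀ i, 1 ≤ i → N (i + 1) ≤ N i) ∧
    ∀ i j : ℕ, 1 ≤ i → 1 ≤ j → ∀ a b : G, a ∈ N i → b ∈ N j → ⁅a, b⁆ ∈ N (i + j)

/-- The `R`-submodule `I_R(K)·I_R(G)` of `R(G)` spanned by the elements `(k-1)(g-1)`,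
`k ∈ K`, `g ∈ G`. -/
noncomputable def relAugMulKG (R : Type*) [CommRing R] {G : Type*} [Group G]
    (K : Subgroup G) : Submodule R (MonoidAlgebra R G) :=
  Submodule.span R {x | ∃ k ∈ K, ∃ g : G, x = (of R G k - 1) * (of R G g - 1)}

/-- The `R`-submodule `I_{R,N}^n(G)` of `R(G)` spanned by all products
`(a₁-1)⋯(a_r-1)` with `aᵢ ∈ N kᵢ` and `k₁+⋯+k_r ≥ n`. -/
noncomputable def nSeriesPow (R : Type*) [CommRing R] {G : Type*} [Group G]
    (N : ℕ → Subgroup G) (n : ℕ) : Submodule R (MonoidAlgebra R G) :=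
  Submodule.span R {x | ∃ l : List (G × ℕ),
    (∀ p ∈ l, 1 ≤ p.2 ∧ p.1 ∈ N p.2) ∧ n ≤ (l.map Prod.snd).sum ∧
    x = (l.map fun p => of R G p.1 - 1).prod}

/-- The augmentation ideal `I_R(G)` of `R(G)`, as the `R`-submodule spanned by the
elements `g - 1`. -/
noncomputable def augSubmodule (R : Type*) [CommRing R] (G : Type*) [Group G] :
    Submodule R (MonoidAlgebra R G) :=
  Submodule.span R {x | ∃ g : G, x = of R G g - 1}

/-- The relative polynomial group
`P_{n,R}^N(G,K) = I_R(G)/(I_R(K)I_R(G) + I_{R,N}^{n+1}(G))`. -/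
noncomputable abbrev relPoly (R : Type*) [CommRing R] (G : Type*) [Group G]
    (K : Subgroup G) (N : ℕ → Subgroup G) (n : ℕ) :=
  augSubmodule R G ⧸
    Submodule.comap (augSubmodule R G).subtype (relAugMulKG R K + nSeriesPow R N (n + 1))

/-- The canonical map `G → P_{n,R}^N(G,K)`, `a ↦ class of (a - 1)`. -/
noncomputable def relPolyMk (R : Type*) [CommRing R] {G : Type*} [Group G]
    (K : Subgroup G) (N : ℕ → Subgroup G) (n : ℕ) (a : G) : relPoly R G K N n :=
  Submodule.Quotient.mk ⟨of R G a - 1, Submodule.subset_span ⟨a, rfl⟩⟩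

open Pointwise

section Aux

variable (R : Type*) [CommRing R] {G : Type*} [Group G]

lemma of_mem_aug (g : G) : of R G g - 1 ∈ augSubmodule R G :=
  Submodule.subset_span ⟨g, rfl⟩

lemma aug_mul_right {x : MonoidAlgebra R G} (hx : x ∈ augSubmodule R G)
    (y : MonoidAlgebra R G) : x * y ∈ augSubmodule R G := by
  induction hx using Submodule.span_induction with
  | mem x h =>
    obtain ⟨g, rfl⟩ := h
    induction y using MonoidAlgebra.induction_on with
    | of h =>
      have e : (of R G g - 1) * of R G h
          = (of R G (g * h) - 1) - (of R G h - 1) := by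
        rw [sub_mul, one_mul, ← map_mul]; abel
      rw [e]; exact sub_mem (of_mem_aug R _) (of_mem_aug R _)
    | add f g hf hg => rw [mul_add]; exact add_mem hf hg
    | smul r f hf => rw [mul_smul_comm]; exact Submodule.smul_mem _ r hf
  | zero => rw [zero_mul]; exact zero_mem _
  | add a b _ _ ha hb => rw [add_mul]; exact add_mem ha hb
  | smul r a _ ha => rw [smul_mul_assoc]; exact Submodule.smul_mem _ r ha

lemma of_mul_aug (g : G) {x : MonoidAlgebra R G} (hx : x ∈ augSubmodule R G) :
    of R G g * x ∈ augSubmodule R G := by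
  induction hx using Submodule.span_induction with
  | mem x h =>
    obtain ⟨h', rfl⟩ := h
    have e : of R G g * (of R G h' - 1)
        = (of R G (g * h') - 1) - (of R G g - 1) := by
      rw [mul_sub, mul_one, ← map_mul]; abel
    rw [e]; exact sub_mem (of_mem_aug R _) (of_mem_aug R _)
  | zero => rw [mul_zero]; exact zero_mem _
  | add a b _ _ ha hb => rw [mul_add]; exact add_mem ha hb
  | smul r a _ ha => rw [mul_smul_comm]; exact Submodule.smul_mem _ r ha

lemma relAug_of_mul {K : Subgroup G} {a : G} (ha : a ∈ K) {x : MonoidAlgebra R G}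
    (hx : x ∈ augSubmodule R G) : (of R G a - 1) * x ∈ relAugMulKG R K := by
  induction hx using Submodule.span_induction with
  | mem x h => obtain ⟨g, rfl⟩ := h; exact Submodule.subset_span ⟨a, ha, g, rfl⟩
  | zero => rw [mul_zero]; exact zero_mem _
  | add a b _ _ ha hb => rw [mul_add]; exact add_mem ha hb
  | smul r a _ ha => rw [mul_smul_comm]; exact Submodule.smul_mem _ r ha

lemma of_mem_nSeriesPow {N : ℕ → Subgroup G} {m : ℕ} (hm : 1 ≤ m) {b : G}
    (hb : b ∈ N m) : of R G b - 1 ∈ nSeriesPow R N m :=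
  Submodule.subset_span ⟨[(b, m)], by simpa using ⟨hm, hb⟩, by simp, by simp⟩

lemma nSeriesPow_mul_aug {N : ℕ → Subgroup G} (hN : IsNSeries G N) {m : ℕ}
    (hm : 1 ≤ m) {b : G} (hb : b ∈ N m) {x : MonoidAlgebra R G}
    (hx : x ∈ augSubmodule R G) : (of R G b - 1) * x ∈ nSeriesPow R N m := by
  induction hx using Submodule.span_induction with
  | mem x h =>
    obtain ⟨g, rfl⟩ := h
    refine Submodule.subset_span ⟨[(b, m), (g, 1)], ?_, by simp, by simp⟩
    rintro p hp
    simp only [List.mem_cons, List.not_mem_nil, or_false] at hp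
    rcases hp with rfl | rfl
    · exact ⟨hm, hb⟩
    · exact ⟨le_refl 1, by show g ∈ N 1; rw [hN.1]; exact Subgroup.mem_top g⟩
  | zero => rw [mul_zero]; exact zero_mem _
  | add a b _ _ ha hb => rw [mul_add]; exact add_mem ha hb
  | smul r a _ ha => rw [mul_smul_comm]; exact Submodule.smul_mem _ r ha

lemma nSeriesPow_le_aug {N : ℕ → Subgroup G} {m : ℕ} (hm : 1 ≤ m) :
    nSeriesPow R N m ≤ augSubmodule R G := by
  rw [nSeriesPow]
  apply Submodule.span_le.mpr
  rintro x ⟨l, hl, hsum, rfl⟩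
  match l with
  | [] => simp at hsum; omega
  | p :: t =>
    simp only [List.map_cons, List.prod_cons]
    exact aug_mul_right R (of_mem_aug R p.1) _

lemma key_mul {K : Subgroup G} [K.Normal] {N : ℕ → Subgroup G}
    (hN : IsNSeries G N) {n : ℕ} {k : G} (hk : k ∈ K ⊔ N (n + 1))
    {x : MonoidAlgebra R G} (hx : x ∈ augSubmodule R G) :
    (of R G k - 1) * x ∈ relAugMulKG R K + nSeriesPow R N (n + 1) := by
  have hk' : k ∈ (K : Set G) * (N (n + 1) : Set G) := by
    rw [← Subgroup.normal_mul]; exact hk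
  obtain ⟨a, ha, b, hb, rfl⟩ := hk'
  have h1 : of R G (a * b) - 1 = (of R G a - 1) * of R G b + (of R G b - 1) := by
    rw [map_mul]; noncomm_ring
  rw [h1, add_mul]
  refine add_mem (Submodule.mem_sup_left ?_) (Submodule.mem_sup_right ?_)
  · rw [mul_assoc]; exact relAug_of_mul R ha (of_mul_aug R b hx)
  · exact nSeriesPow_mul_aug R hN (by omega) hb hx

end Aux

section Aux2

variable (R : Type*) [CommRing R] {G : Type*} [Group G] (K : Subgroup G) [K.Normal]

/-- The algebra map `R(G) → R(G/K)`. -/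
noncomputable def auxPi : MonoidAlgebra R G →ₐ[R] MonoidAlgebra R (G ⧸ K) :=
  MonoidAlgebra.mapDomainAlgHom R R (QuotientGroup.mk' K)

lemma auxPi_of (g : G) :
    auxPi R K (of R G g) = of R (G ⧸ K) (QuotientGroup.mk' K g) := by
  simp [auxPi, MonoidAlgebra.of_apply, Finsupp.mapDomain_single]

lemma auxPi_aug {x : MonoidAlgebra R G} (hx : x ∈ augSubmodule R G) :
    auxPi R K x ∈ augSubmodule R (G ⧸ K) := by
  induction hx using Submodule.span_induction with
  | mem x h =>
    obtain ⟨g, rfl⟩ := h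
    rw [map_sub, map_one, auxPi_of]
    exact of_mem_aug R _
  | zero => rw [map_zero]; exact zero_mem _
  | add a b _ _ ha hb => rw [map_add]; exact add_mem ha hb
  | smul r a _ ha => rw [map_smul]; exact Submodule.smul_mem _ r ha

/-- `auxPi` restricted to a map between the augmentation submodules. -/
noncomputable def auxAL : augSubmodule R G →ₗ[R] augSubmodule R (G ⧸ K) :=
  LinearMap.codRestrict _ ((auxPi R K).toLinearMap ∘ₗ (augSubmodule R G).subtype)
    fun x => auxPi_aug R K x.2

lemma auxAL_apply (x : augSubmodule R G) :
    (auxAL R K x : MonoidAlgebra R (G ⧸ K)) = auxPi R K x.1 := rfl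

lemma auxPi_M (N : ℕ → Subgroup G) (n : ℕ) {x : MonoidAlgebra R G}
    (hx : x ∈ relAugMulKG R K + nSeriesPow R N (n + 1)) :
    auxPi R K x ∈ relAugMulKG R (⊥ : Subgroup (G ⧸ K)) +
      nSeriesPow R (fun i => (N i).map (QuotientGroup.mk' K)) (n + 1) := by
  rw [Submodule.add_eq_sup, Submodule.mem_sup] at hx
  obtain ⟨u, hu, v, hv, rfl⟩ := hx
  rw [map_add]
  refine add_mem (Submodule.mem_sup_left ?_) (Submodule.mem_sup_right ?_)
  · induction hu using Submodule.span_induction with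
    | mem x h =>
      obtain ⟨k, hk, g, rfl⟩ := h
      have hk1 : QuotientGroup.mk' K k = 1 := by
        rw [← MonoidHom.mem_ker, QuotientGroup.ker_mk']; exact hk
      rw [map_mul, map_sub, map_one, auxPi_of, hk1, map_one, sub_self, zero_mul]
      exact zero_mem _
    | zero => rw [map_zero]; exact zero_mem _
    | add a b _ _ ha hb => rw [map_add]; exact add_mem ha hb
    | smul r a _ ha => rw [map_smul]; exact Submodule.smul_mem _ r ha
  · induction hv using Submodule.span_induction with
    | mem x h =>
      obtain ⟨l, hl, hsum, rfl⟩ := h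
      refine Submodule.subset_span
        ⟨l.map fun p => (QuotientGroup.mk' K p.1, p.2), ?_, ?_, ?_⟩
      · rintro p hp
        obtain ⟨q, hq, rfl⟩ := List.mem_map.mp hp
        exact ⟨(hl q hq).1, Subgroup.mem_map_of_mem _ (hl q hq).2⟩
      · rwa [List.map_map]
      · rw [map_list_prod, List.map_map, List.map_map]
        refine congrArg List.prod (List.map_congr_left fun p _ => ?_)
        show auxPi R K (of R G p.1 - 1) = of R (G ⧸ K) (QuotientGroup.mk' K p.1) - 1
        rw [map_sub, map_one, auxPi_of]
    | zero => rw [map_zero]; exact zero_mem _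
    | add a b _ _ ha hb => rw [map_add]; exact add_mem ha hb
    | smul r a _ ha => rw [map_smul]; exact Submodule.smul_mem _ r ha

/-- The induced map between relative polynomial groups. -/
noncomputable def auxF (N : ℕ → Subgroup G) (n : ℕ) :
    relPoly R G K N n →ₗ[R]
      relPoly R (G ⧸ K) ⊥ (fun i => (N i).map (QuotientGroup.mk' K)) n :=
  Submodule.mapQ _ _ (auxAL R K) (show _ ≤ Submodule.comap (auxAL R K) _ from fun x hx => auxPi_M R K N n hx)

lemma auxF_mk (N : ℕ → Subgroup G) (n : ℕ) (a : G) :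
    auxF R K N n (relPolyMk R K N n a) =
      relPolyMk R ⊥ (fun i => (N i).map (QuotientGroup.mk' K)) n
        (QuotientGroup.mk' K a) := by
  rw [relPolyMk, auxF, Submodule.mapQ_apply]
  congr 1
  exact Subtype.ext (by rw [auxAL_apply, map_sub, map_one, auxPi_of])

lemma auxPi_ker {x : MonoidAlgebra R G} (hx : auxPi R K x = 0) :
    x ∈ Submodule.span R
      {y | ∃ a b : G, QuotientGroup.mk' K a = QuotientGroup.mk' K b ∧
        y = of R G a - of R G b} := by
  classical
  set D := Submodule.span R
      {y | ∃ a b : G, QuotientGroup.mk' K a = QuotientGroup.mk' K b ∧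
        y = of R G a - of R G b} with hD
  set t : G → G := fun g => (QuotientGroup.mk' K g : G ⧸ K).out with ht
  have htπ : ∀ g : G, QuotientGroup.mk' K (t g) = QuotientGroup.mk' K g := by
    intro g
    simp only [ht, QuotientGroup.mk'_apply]
    exact QuotientGroup.out_eq' _
  set TL : MonoidAlgebra R G →ₗ[R] MonoidAlgebra R G := MonoidAlgebra.mapDomainLinearMap R R t
    with hTL
  have step1 : ∀ y : MonoidAlgebra R G, y - TL y ∈ D := by
    intro y
    induction y using MonoidAlgebra.induction_on with
    | of g =>
      have e : TL (of R G g) = of R G (t g) := by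
        simp [hTL, MonoidAlgebra.of_apply]
      rw [e]
      exact Submodule.subset_span ⟨g, t g, (htπ g).symm, rfl⟩
    | add f g hf hg =>
      rw [map_add]
      have e : f + g - (TL f + TL g) = (f - TL f) + (g - TL g) := by abel
      rw [e]; exact add_mem hf hg
    | smul r f hf =>
      rw [map_smul, ← smul_sub]
      exact Submodule.smul_mem _ r hf
  have step2 : TL x = 0 := by
    have hcomp : t = Quotient.out ∘ ⇑(QuotientGroup.mk' K) := rfl
    rw [hTL, hcomp, MonoidAlgebra.mapDomainLinearMap_comp, LinearMap.comp_apply]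
    have e : MonoidAlgebra.mapDomainLinearMap R R (⇑(QuotientGroup.mk' K)) x = auxPi R K x := rfl
    rw [e, hx, map_zero]
  have h := step1 x
  rwa [step2, sub_zero] at h

end Aux2

section Aux3

variable (R : Type*) [CommRing R] {G : Type*} [Group G]

lemma relPoly_mk_zero (K : Subgroup G) (N : ℕ → Subgroup G) (n : ℕ)
    {x : augSubmodule R G}
    (h : (x : MonoidAlgebra R G) ∈ relAugMulKG R K + nSeriesPow R N (n + 1)) :
    (Submodule.Quotient.mk x : relPoly R G K N n) = 0 :=
  (Submodule.Quotient.mk_eq_zero _).mpr h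

lemma relPoly_mk_eq (K : Subgroup G) (N : ℕ → Subgroup G) (n : ℕ)
    {x y : augSubmodule R G}
    (h : (x : MonoidAlgebra R G) - (y : MonoidAlgebra R G)
      ∈ relAugMulKG R K + nSeriesPow R N (n + 1)) :
    (Submodule.Quotient.mk x : relPoly R G K N n) = Submodule.Quotient.mk y := by
  rw [Submodule.Quotient.eq]
  exact h

lemma spanK_mk (K : Subgroup G) (N : ℕ → Subgroup G) (n : ℕ) :
    ∀ v ∈ Submodule.span R {y | ∃ k ∈ K, y = of R G k - 1},
      ∃ h : v ∈ augSubmodule R G,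
        (Submodule.Quotient.mk ⟨v, h⟩ : relPoly R G K N n) ∈
          Submodule.span R {x | ∃ k ∈ K ⊔ N (n + 1), x = relPolyMk R K N n k} := by
  intro v hv
  induction hv using Submodule.span_induction with
  | mem y h =>
    obtain ⟨k, hk, rfl⟩ := h
    exact ⟨of_mem_aug R k,
      Submodule.subset_span ⟨k, (le_sup_left : K ≤ K ⊔ N (n + 1)) hk, rfl⟩⟩
  | zero =>
    refine ⟨zero_mem _, ?_⟩
    have e : (Submodule.Quotient.mk ⟨(0 : MonoidAlgebra R G), zero_mem _⟩ :
        relPoly R G K N n) = 0 := (Submodule.Quotient.mk_eq_zero _).mpr (zero_mem _)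
    rw [e]
    exact zero_mem _
  | add x y hx hy px py =>
    obtain ⟨hxA, pxm⟩ := px
    obtain ⟨hyA, pym⟩ := py
    refine ⟨add_mem hxA hyA, ?_⟩
    have e : (⟨x + y, add_mem hxA hyA⟩ : augSubmodule R G) = ⟨x, hxA⟩ + ⟨y, hyA⟩ := rfl
    rw [e, Submodule.Quotient.mk_add]
    exact add_mem pxm pym
  | smul r x hx px =>
    obtain ⟨hxA, pxm⟩ := px
    refine ⟨Submodule.smul_mem _ r hxA, ?_⟩
    have e : (⟨r • x, Submodule.smul_mem _ r hxA⟩ : augSubmodule R G)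
        = r • (⟨x, hxA⟩ : augSubmodule R G) := rfl
    rw [e, Submodule.Quotient.mk_smul]
    exact Submodule.smul_mem _ r pxm

end Aux3

/-- **Lemma 2.5**: for a normal subgroup `K ⊴ G`, an N-series `N` of `G` and `n ≥ 1`,
the sequence `R ⊗ (K·N_{n+1}/[K,K]·N_{n+1}) → P_{n,R}^N(G,K) → P_{n,R}^{πN}(G/K) → 0`
is exact: there is a (unique) homomorphism `f = P_n(π)` with `f(class (a-1)) =
class (aK-1)`; it is surjective; the map `k ↦ class (k-1)` on `K·N_{n+1}` is
multiplicative-to-additive and vanishes on `[K,K]·N_{n+1}` (so it is well defined on the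
quotient `K·N_{n+1}/[K,K]·N_{n+1}`); and `ker f` is the image of its `R`-linear
extension, i.e. the `R`-span of the classes of `k - 1`, `k ∈ K·N_{n+1}`. -/
theorem relPoly_exact_sequence (R : Type*) [CommRing R] {G : Type*} [Group G]
    (K : Subgroup G) [K.Normal] (N : ℕ → Subgroup G) (hN : IsNSeries G N)
    (n : ℕ) (hn : 1 ≤ n) :
    ∃ f : relPoly R G K N n →ₗ[R]
        relPoly R (G ⧸ K) ⊥ (fun i => (N i).map (QuotientGroup.mk' K)) n,
      (∀ a : G, f (relPolyMk R K N n a) =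
        relPolyMk R ⊥ (fun i => (N i).map (QuotientGroup.mk' K)) n (QuotientGroup.mk' K a)) ∧
      Function.Surjective f ∧
      (∀ k k' : G, k ∈ K ⊔ N (n + 1) → k' ∈ K ⊔ N (n + 1) →
        relPolyMk R K N n (k * k') = relPolyMk R K N n k + relPolyMk R K N n k') ∧
      (∀ k : G, k ∈ ⁅K, K⁆ ⊔ N (n + 1) → relPolyMk R K N n k = 0) ∧
      LinearMap.ker f =
        Submodule.span R {x | ∃ k ∈ K ⊔ N (n + 1), x = relPolyMk R K N n k} := by
  classical
  -- the multiplicative-to-additive property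
  have hhom : ∀ k k' : G, k ∈ K ⊔ N (n + 1) → k' ∈ K ⊔ N (n + 1) →
      relPolyMk R K N n (k * k') = relPolyMk R K N n k + relPolyMk R K N n k' := by
    intro k k' hk hk'
    have e : (of R G (k * k') - 1) - ((of R G k - 1) + (of R G k' - 1))
        = (of R G k - 1) * (of R G k' - 1) := by rw [map_mul]; noncomm_ring
    have hmem : (of R G (k * k') - 1) - ((of R G k - 1) + (of R G k' - 1))
        ∈ relAugMulKG R K + nSeriesPow R N (n + 1) :=
      e ▸ key_mul R hN hk (of_mem_aug R k')
    rw [relPolyMk, relPolyMk, relPolyMk, ← Submodule.Quotient.mk_add]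
    exact relPoly_mk_eq R K N n (by simpa using hmem)
  have hzero : ∀ g : G, of R G g - 1 ∈ relAugMulKG R K + nSeriesPow R N (n + 1) →
      relPolyMk R K N n g = 0 := fun g h => relPoly_mk_zero R K N n h
  have h1 : relPolyMk R K N n 1 = 0 :=
    hzero 1 (by rw [map_one, sub_self]; exact zero_mem _)
  have hinv : ∀ g : G, g ∈ K ⊔ N (n + 1) →
      relPolyMk R K N n g⁻¹ = - relPolyMk R K N n g := by
    intro g hg
    have h2 := hhom g g⁻¹ hg (inv_mem hg)
    rw [mul_inv_cancel, h1] at h2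
    exact eq_neg_of_add_eq_zero_right h2.symm
  -- vanishing on [K,K] ⊔ N (n+1)
  have hvanish : ∀ k : G, k ∈ ⁅K, K⁆ ⊔ N (n + 1) → relPolyMk R K N n k = 0 := by
    intro k hk
    let T : Subgroup G :=
      { carrier := {g | g ∈ K ⊔ N (n + 1) ∧ relPolyMk R K N n g = 0}
        one_mem' := ⟨one_mem _, h1⟩
        mul_mem' := by
          rintro a b ⟨ha, pa⟩ ⟨hb, pb⟩
          exact ⟨mul_mem ha hb, by rw [hhom a b ha hb, pa, pb, add_zero]⟩
        inv_mem' := by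
          rintro a ⟨ha, pa⟩
          exact ⟨inv_mem ha, by rw [hinv a ha, pa, neg_zero]⟩ }
    have hT : ⁅K, K⁆ ⊔ N (n + 1) ≤ T := by
      refine sup_le ?_ ?_
      · rw [Subgroup.commutator_le]
        intro a ha b hb
        have haS : a ∈ K ⊔ N (n + 1) := (le_sup_left : K ≤ K ⊔ N (n + 1)) ha
        have hbS : b ∈ K ⊔ N (n + 1) := (le_sup_left : K ≤ K ⊔ N (n + 1)) hb
        refine ⟨?_, ?_⟩
        · show a * b * a⁻¹ * b⁻¹ ∈ K ⊔ N (n + 1)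
          exact mul_mem (mul_mem (mul_mem haS hbS) (inv_mem haS)) (inv_mem hbS)
        · show relPolyMk R K N n ⁅a, b⁆ = 0
          rw [commutatorElement_def,
            hhom _ _ (mul_mem (mul_mem haS hbS) (inv_mem haS)) (inv_mem hbS),
            hhom _ _ (mul_mem haS hbS) (inv_mem haS),
            hhom _ _ haS hbS, hinv a haS, hinv b hbS]
          abel
      · intro b hb
        exact ⟨(le_sup_right : N (n + 1) ≤ K ⊔ N (n + 1)) hb,
          hzero b (Submodule.mem_sup_right (of_mem_nSeriesPow R (by omega) hb))⟩
    exact (hT hk).2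
  -- surjectivity
  have hsurj : Function.Surjective (auxF R K N n) := by
    intro y
    obtain ⟨⟨x', hx'⟩, rfl⟩ := Submodule.Quotient.mk_surjective _ y
    have hle : augSubmodule R (G ⧸ K) ≤
        Submodule.map (auxPi R K).toLinearMap (augSubmodule R G) := by
      apply Submodule.span_le.mpr
      rintro z ⟨q, rfl⟩
      obtain ⟨a, rfl⟩ := QuotientGroup.mk'_surjective K q
      exact ⟨of R G a - 1, of_mem_aug R a, by rw [AlgHom.toLinearMap_apply, map_sub, map_one, auxPi_of]⟩
    obtain ⟨ξ, hξ, hπξ⟩ := hle hx'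
    refine ⟨Submodule.Quotient.mk ⟨ξ, hξ⟩, ?_⟩
    rw [auxF, Submodule.mapQ_apply]
    congr 1
    exact Subtype.ext (by rw [auxAL_apply]; exact hπξ)
  -- kernel
  have hker : LinearMap.ker (auxF R K N n) =
      Submodule.span R {x | ∃ k ∈ K ⊔ N (n + 1), x = relPolyMk R K N n k} := by
    apply le_antisymm
    · intro x hx
      obtain ⟨⟨ξ, hξA⟩, rfl⟩ := Submodule.Quotient.mk_surjective _ x
      rw [LinearMap.mem_ker, auxF, Submodule.mapQ_apply,
        Submodule.Quotient.mk_eq_zero] at hx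
      have hπξM' : auxPi R K ξ ∈ relAugMulKG R (⊥ : Subgroup (G ⧸ K)) +
          nSeriesPow R (fun i => (N i).map (QuotientGroup.mk' K)) (n + 1) := hx
      have hπξ : auxPi R K ξ ∈
          nSeriesPow R (fun i => (N i).map (QuotientGroup.mk' K)) (n + 1) := by
        have hbot : relAugMulKG R (⊥ : Subgroup (G ⧸ K)) ≤
            nSeriesPow R (fun i => (N i).map (QuotientGroup.mk' K)) (n + 1) := by
          apply Submodule.span_le.mpr
          rintro z ⟨c, hc, g, rfl⟩
          rw [Subgroup.mem_bot] at hc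
          subst hc
          rw [map_one, sub_self, zero_mul]
          exact zero_mem _
        have hle2 : relAugMulKG R (⊥ : Subgroup (G ⧸ K)) +
            nSeriesPow R (fun i => (N i).map (QuotientGroup.mk' K)) (n + 1) ≤
            nSeriesPow R (fun i => (N i).map (QuotientGroup.mk' K)) (n + 1) := by
          rw [Submodule.add_eq_sup]
          exact sup_le hbot le_rfl
        exact hle2 hπξM'
      have hlift : ∀ l' : List ((G ⧸ K) × ℕ),
          (∀ p ∈ l', 1 ≤ p.2 ∧ p.1 ∈ (N p.2).map (QuotientGroup.mk' K)) →
          ∃ l : List (G × ℕ), (∀ p ∈ l, 1 ≤ p.2 ∧ p.1 ∈ N p.2) ∧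
            List.map Prod.snd l = List.map Prod.snd l' ∧
            auxPi R K ((l.map fun p => of R G p.1 - 1).prod)
              = (l'.map fun p => of R (G ⧸ K) p.1 - 1).prod := by
        intro l'
        induction l' with
        | nil => exact fun _ => ⟨[], by simp, by simp, by simp⟩
        | cons p t ih =>
          intro h
          obtain ⟨a, haN, hπa⟩ := (h p (List.mem_cons_self (a := p) (l := t))).2
          obtain ⟨l, h1l, h2l, h3l⟩ := ih fun q hq => h q (List.mem_cons_of_mem p hq)
          refine ⟨(a, p.2) :: l, ?_, ?_, ?_⟩
          · rintro q hq
            rcases List.mem_cons.mp hq with rfl | hq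
            · exact ⟨(h p (List.mem_cons_self (a := p) (l := t))).1, haN⟩
            · exact h1l q hq
          · simp [h2l]
          · simp only [List.map_cons, List.prod_cons, map_mul]
            rw [map_sub, map_one, auxPi_of, hπa, h3l]
      have hmap : nSeriesPow R (fun i => (N i).map (QuotientGroup.mk' K)) (n + 1) ≤
          Submodule.map (auxPi R K).toLinearMap (nSeriesPow R N (n + 1)) := by
        apply Submodule.span_le.mpr
        rintro z ⟨l', hl', hsum, rfl⟩
        obtain ⟨l, h1l, h2l, h3l⟩ := hlift l' hl'
        exact ⟨_, Submodule.subset_span ⟨l, h1l, by rw [h2l]; exact hsum, rfl⟩, h3l⟩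
      obtain ⟨η, hη, hπη⟩ := hmap hπξ
      have hζ : auxPi R K (ξ - η) = 0 := by
        rw [map_sub]
        rw [AlgHom.toLinearMap_apply] at hπη
        rw [hπη, sub_self]
      have hζD := auxPi_ker R K hζ
      have hDle : Submodule.span R {y | ∃ a b : G,
            QuotientGroup.mk' K a = QuotientGroup.mk' K b ∧ y = of R G a - of R G b}
          ≤ relAugMulKG R K + Submodule.span R {y | ∃ k ∈ K, y = of R G k - 1} := by
        apply Submodule.span_le.mpr
        rintro z ⟨a, b, hab, rfl⟩
        have hkab : a * b⁻¹ ∈ K := by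
          rw [← QuotientGroup.ker_mk' K, MonoidHom.mem_ker, map_mul, map_inv, hab,
            mul_inv_cancel]
        have h2 : of R G (a * b⁻¹) * of R G b = of R G a := by
          rw [← map_mul, inv_mul_cancel_right]
        have e : of R G a - of R G b
            = (of R G (a * b⁻¹) - 1) * (of R G b - 1) + (of R G (a * b⁻¹) - 1) := by
          rw [← h2]; noncomm_ring
        rw [e]
        exact add_mem (Submodule.mem_sup_left (Submodule.subset_span ⟨_, hkab, b, rfl⟩))
          (Submodule.mem_sup_right (Submodule.subset_span ⟨_, hkab, rfl⟩))
      have hζ2 := hDle hζD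
      rw [Submodule.add_eq_sup, Submodule.mem_sup] at hζ2
      obtain ⟨u, hu, v, hv, huv⟩ := hζ2
      have hvA : v ∈ augSubmodule R G := by
        have hle3 : Submodule.span R {y | ∃ k ∈ K, y = of R G k - 1} ≤ augSubmodule R G :=
          Submodule.span_le.mpr (by rintro z ⟨c, _, rfl⟩; exact of_mem_aug R c)
        exact hle3 hv
      have huA : u + η ∈ augSubmodule R G := by
        have hu' : u ∈ augSubmodule R G := by
          have hle4 : relAugMulKG R K ≤ augSubmodule R G :=
            Submodule.span_le.mpr
              (by rintro z ⟨c, _, g, rfl⟩; exact aug_mul_right R (of_mem_aug R c) _)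
          exact hle4 hu
        exact add_mem hu' (nSeriesPow_le_aug R (by omega) hη)
      have hξeq : ξ = v + (u + η) := by
        have h5 : ξ = u + v + η := by rw [huv]; abel
        rw [h5]; abel
      have hsplit : (⟨ξ, hξA⟩ : augSubmodule R G)
          = ⟨v, hvA⟩ + ⟨u + η, huA⟩ := Subtype.ext hξeq
      rw [hsplit, Submodule.Quotient.mk_add]
      have hz : (Submodule.Quotient.mk ⟨u + η, huA⟩ : relPoly R G K N n) = 0 :=
        relPoly_mk_zero R K N n
          (add_mem (Submodule.mem_sup_left hu) (Submodule.mem_sup_right hη))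
      rw [hz, add_zero]
      obtain ⟨hvA', hmem⟩ := spanK_mk R K N n v hv
      exact hmem
    · apply Submodule.span_le.mpr
      rintro x ⟨k, hk, rfl⟩
      rw [SetLike.mem_coe, LinearMap.mem_ker, auxF_mk]
      have hπk : QuotientGroup.mk' K k ∈ (N (n + 1)).map (QuotientGroup.mk' K) := by
        have h6 : QuotientGroup.mk' K k ∈ (K ⊔ N (n + 1)).map (QuotientGroup.mk' K) :=
          Subgroup.mem_map_of_mem _ hk
        rw [Subgroup.map_sup] at h6
        have h7 : K.map (QuotientGroup.mk' K) = ⊥ := by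
          rw [Subgroup.map_eq_bot_iff, QuotientGroup.ker_mk']
        rwa [h7, bot_sup_eq] at h6
      exact relPoly_mk_zero R ⊥ (fun i => (N i).map (QuotientGroup.mk' K)) n
        (Submodule.mem_sup_right (of_mem_nSeriesPow R (by omega) hπk))
  exact ⟨auxF R K N n, auxF_mk R K N n, hsurj, hhom, hvanish, hker⟩
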